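/- The matrix A = (1/4)·[[0,8,1,0,0],[8,0,1,0,0],[75/2,75/2,0,1,0],[0,0,0,0,1],[829,829,256,110,0]] is entrywise nonnegative, has characteristic polynomial (x − 15/4)(x − 9/4)(x + 2)³, and its minimal polynomial is (x − 15/4)(x − 9/4)(x + 2)²; in particular A is not diagonalizable. -/

import Mathlib

set_option maxHeartbeats 4000000
open Polynomial Matrix

namespace NondiagAux

noncomputable abbrev A : Matrix (Fin 5) (Fin 5) ℝ :=
      (1 / 4 : ℝ) • !![0, 8, 1, 0, 0;
                       8, 0, 1, 0, 0;
                       75 / 2, 75 / 2, 0, 1, 0;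
                       0, 0, 0, 0, 1;
                       829, 829, 256, 110, 0]

noncomputable abbrev B1 : Matrix (Fin 5) (Fin 5) ℝ :=
  !![-(15/4), 2, 1/4, 0, 0;
     2, -(15/4), 1/4, 0, 0;
     75/8, 75/8, -(15/4), 1/4, 0;
     0, 0, 0, -(15/4), 1/4;
     829/4, 829/4, 64, 110/4, -(15/4)]

noncomputable abbrev B2 : Matrix (Fin 5) (Fin 5) ℝ :=
  !![-(9/4), 2, 1/4, 0, 0;
     2, -(9/4), 1/4, 0, 0;
     75/8, 75/8, -(9/4), 1/4, 0;
     0, 0, 0, -(9/4), 1/4;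
     829/4, 829/4, 64, 110/4, -(9/4)]

noncomputable abbrev B3 : Matrix (Fin 5) (Fin 5) ℝ :=
  !![2, 2, 1/4, 0, 0;
     2, 2, 1/4, 0, 0;
     75/8, 75/8, 2, 1/4, 0;
     0, 0, 0, 2, 1/4;
     829/4, 829/4, 64, 110/4, 2]

lemma aeval1 : aeval A (X - C (15/4 : ℝ)) = B1 := by
  simp only [map_sub, aeval_X, aeval_C, Algebra.algebraMap_eq_smul_one]
  ext i j; fin_cases i <;> fin_cases j <;>
    simp [Matrix.one_apply] <;> norm_num

lemma aeval2 : aeval A (X - C (9/4 : ℝ)) = B2 := by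
  simp only [map_sub, aeval_X, aeval_C, Algebra.algebraMap_eq_smul_one]
  ext i j; fin_cases i <;> fin_cases j <;>
    simp [Matrix.one_apply] <;> norm_num

lemma aeval3 : aeval A (X + C (2 : ℝ)) = B3 := by
  simp only [map_add, aeval_X, aeval_C, Algebra.algebraMap_eq_smul_one]
  ext i j; fin_cases i <;> fin_cases j <;>
    simp [Matrix.one_apply] <;> norm_num

lemma m12 : B1 * B2 =
    !![473/32, -(309/32), -1, 1/16, 0;
       -(309/32), 473/32, -1, 1/16, 0;
       -(75/2), -(75/2), 105/8, -(3/2), 1/16;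
       829/16, 829/16, 16, 245/16, -(3/2);
       -229, -229, -(2243/8), -149, 245/16] := by
  ext i j; fin_cases i <;> fin_cases j <;>
    simp [Matrix.mul_apply, Fin.sum_univ_five, Matrix.vecHead, Matrix.vecTail] <;> norm_num

lemma m123 : B1 * B2 * B3 =
    !![7/8, 7/8, -(23/32), -(1/8), 1/64;
       7/8, 7/8, -(23/32), -(1/8), 1/64;
       -14, -14, 23/2, 2, -(1/4);
       371/8, 371/8, -(1219/32), -(53/8), 53/64;
       -371, -371, 1219/4, 53, -(53/8)] := by
  rw [m12]
  ext i j; fin_cases i <;> fin_cases j <;>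
    simp [Matrix.mul_apply, Fin.sum_univ_five, Matrix.vecHead, Matrix.vecTail] <;> norm_num

lemma m1233 : B1 * B2 * B3 * B3 = 0 := by
  rw [m123]
  ext i j; fin_cases i <;> fin_cases j <;>
    simp [Matrix.mul_apply, Fin.sum_univ_five, Matrix.vecHead, Matrix.vecTail] <;> norm_num

lemma m23 : B2 * B3 =
    !![59/32, 59/32, 7/16, 1/16, 0;
       59/32, 59/32, 7/16, 1/16, 0;
       525/32, 525/32, 3/16, -(1/16), 1/16;
       829/16, 829/16, 16, 19/8, -(1/16);
       15403/16, 15403/16, 701/8, 73/8, 19/8] := by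
  ext i j; fin_cases i <;> fin_cases j <;>
    simp [Matrix.mul_apply, Fin.sum_univ_five, Matrix.vecHead, Matrix.vecTail] <;> norm_num

lemma m233 : (B2 * B3 * B3) 0 0 = 1469/128 := by
  rw [m23]
  simp [Matrix.mul_apply, Fin.sum_univ_five, Matrix.vecHead, Matrix.vecTail] <;> norm_num

lemma m13 : B1 * B3 =
    !![-(37/32), -(37/32), 1/16, 1/16, 0;
       -(37/32), -(37/32), 1/16, 1/16, 0;
       75/32, 75/32, -(45/16), -(7/16), 1/16;
       829/16, 829/16, 16, -(5/8), -(7/16);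
       10429/16, 10429/16, -(67/8), -(257/8), -(5/8)] := by
  ext i j; fin_cases i <;> fin_cases j <;>
    simp [Matrix.mul_apply, Fin.sum_univ_five, Matrix.vecHead, Matrix.vecTail] <;> norm_num

lemma m133 : (B1 * B3 * B3) 0 0 = -(517/128) := by
  rw [m13]
  simp [Matrix.mul_apply, Fin.sum_univ_five, Matrix.vecHead, Matrix.vecTail] <;> norm_num

noncomputable abbrev f1 : ℝ[X] := X - C (15/4)
noncomputable abbrev f2 : ℝ[X] := X - C (9/4)
noncomputable abbrev f3 : ℝ[X] := X + C 2
noncomputable abbrev pmin : ℝ[X] := f1 * f2 * f3 ^ 2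

lemma f3_eq : f3 = X - C (-2 : ℝ) := by simp [f3]

lemma aeval_pmin : aeval A pmin = 0 := by
  simp only [pmin, _root_.map_mul, _root_.map_pow, aeval1, aeval2, aeval3, pow_two, ← mul_assoc, m1233]

lemma aeval_f1f2_ne : aeval A (f1 * f2) ≠ 0 := by
  simp only [_root_.map_mul, aeval1, aeval2, m12]
  intro h
  have := congrFun (congrFun h 0) 0
  norm_num at this

lemma aeval_f1f2f3_ne : aeval A (f1 * f2 * f3) ≠ 0 := by
  simp only [_root_.map_mul, aeval1, aeval2, aeval3, m123]
  intro h
  have := congrFun (congrFun h 0) 0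
  norm_num at this

lemma aeval_f2f33_ne : aeval A (f2 * f3 ^ 2) ≠ 0 := by
  simp only [_root_.map_mul, _root_.map_pow, aeval2, aeval3, pow_two, ← mul_assoc]
  intro h
  have := congrFun (congrFun h 0) 0
  rw [m233] at this
  norm_num at this

lemma aeval_f1f33_ne : aeval A (f1 * f3 ^ 2) ≠ 0 := by
  simp only [_root_.map_mul, _root_.map_pow, aeval1, aeval3, pow_two, ← mul_assoc]
  intro h
  have := congrFun (congrFun h 0) 0
  rw [m133] at this
  norm_num at this

lemma prime_f1 : Prime f1 := prime_X_sub_C _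
lemma prime_f2 : Prime f2 := prime_X_sub_C _
lemma prime_f3 : Prime f3 := f3_eq ▸ prime_X_sub_C _

lemma minpoly_eq : minpoly ℝ A = pmin := by
  have hint : IsIntegral ℝ A := Algebra.IsIntegral.isIntegral A
  have hmon : (minpoly ℝ A).Monic := minpoly.monic hint
  set m := minpoly ℝ A with hm
  have hdvd : m ∣ pmin := minpoly.dvd ℝ A aeval_pmin
  have haem : aeval A m = 0 := minpoly.aeval ℝ A
  have hdvd_ne : ∀ q : ℝ[X], m ∣ q → aeval A q ≠ 0 → False := by
    intro q ⟨r, hr⟩ hne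
    exact hne (by rw [hr, _root_.map_mul, haem, zero_mul])
  have h1 : f1 ∣ m := by
    by_contra h
    have hc : IsCoprime m f1 := (prime_f1.coprime_iff_not_dvd.mpr h).symm
    have : m ∣ f2 * f3 ^ 2 := hc.dvd_of_dvd_mul_left (by
      have : pmin = f1 * (f2 * f3 ^ 2) := by ring
      rwa [this] at hdvd)
    exact hdvd_ne _ this aeval_f2f33_ne
  have h2 : f2 ∣ m := by
    by_contra h
    have hc : IsCoprime m f2 := (prime_f2.coprime_iff_not_dvd.mpr h).symm
    have : m ∣ f1 * f3 ^ 2 := hc.dvd_of_dvd_mul_left (by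
      have : pmin = f2 * (f1 * f3 ^ 2) := by ring
      rwa [this] at hdvd)
    exact hdvd_ne _ this aeval_f1f33_ne
  have h3 : f3 ∣ m := by
    by_contra h
    have hc : IsCoprime m (f3 ^ 2) :=
      ((prime_f3.coprime_iff_not_dvd.mpr h).symm).pow_right
    have : m ∣ f1 * f2 := hc.dvd_of_dvd_mul_left (by
      have : pmin = f3 ^ 2 * (f1 * f2) := by ring
      rwa [this] at hdvd)
    exact hdvd_ne _ this aeval_f1f2_ne
  have h33 : f3 ^ 2 ∣ m := by
    by_contra h
    obtain ⟨u, hu⟩ := h3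
    have hf3u : ¬ f3 ∣ u := fun ⟨v, hv⟩ => h ⟨v, by rw [hu, hv]; ring⟩
    have hcu : IsCoprime u f3 := (prime_f3.coprime_iff_not_dvd.mpr hf3u).symm
    have hf3ne : f3 ≠ 0 := prime_f3.ne_zero
    have hdvd' : f3 * u ∣ f3 * (f3 * (f1 * f2)) := by
      rw [← hu]
      have : pmin = f3 * (f3 * (f1 * f2)) := by ring
      rwa [this] at hdvd
    have hu' : u ∣ f3 * (f1 * f2) := (mul_dvd_mul_iff_left hf3ne).mp hdvd'
    have hu'' : u ∣ f1 * f2 := hcu.dvd_of_dvd_mul_left hu'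
    have hmd : m ∣ f1 * f2 * f3 := by
      rw [hu]
      obtain ⟨w, hw⟩ := hu''
      exact ⟨w, by rw [hw]; ring⟩
    exact hdvd_ne _ hmd aeval_f1f2f3_ne
  have c12 : IsCoprime f1 f2 :=
    isCoprime_X_sub_C_of_isUnit_sub (by norm_num)
  have c13 : IsCoprime f1 (f3 ^ 2) :=
    (f3_eq ▸ isCoprime_X_sub_C_of_isUnit_sub (by norm_num) : IsCoprime f1 f3).pow_right
  have c23 : IsCoprime f2 (f3 ^ 2) :=
    (f3_eq ▸ isCoprime_X_sub_C_of_isUnit_sub (by norm_num) : IsCoprime f2 f3).pow_right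
  have hpd : pmin ∣ m := (c13.mul_left c23).mul_dvd (c12.mul_dvd h1 h2) h33
  have hpmon : pmin.Monic := by
    apply Polynomial.Monic.mul
    · exact (monic_X_sub_C _).mul (monic_X_sub_C _)
    · exact (f3_eq ▸ monic_X_sub_C (-2 : ℝ)).pow 2
  exact eq_of_monic_of_associated hmon hpmon (associated_of_dvd_dvd hdvd hpd)

lemma aeval_conj (P B : Matrix (Fin 5) (Fin 5) ℝ) (hP : IsUnit P) (q : ℝ[X]) :
    aeval (P * B * P⁻¹) q = P * aeval B q * P⁻¹ := by
  have hPi : P * P⁻¹ = 1 := mul_nonsing_inv P ((isUnit_iff_isUnit_det P).mp hP)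
  have hiP : P⁻¹ * P = 1 := nonsing_inv_mul P ((isUnit_iff_isUnit_det P).mp hP)
  induction q using Polynomial.induction_on' with
  | add p q hp hq => simp [map_add, hp, hq, Matrix.mul_add, Matrix.add_mul]
  | monomial n a =>
    simp only [aeval_monomial]
    have hpow : ∀ n : ℕ, (P * B * P⁻¹) ^ n = P * B ^ n * P⁻¹ := by
      intro n
      induction n with
      | zero => simp [hPi]
      | succ k ih =>
        rw [pow_succ, ih, pow_succ]
        calc P * B ^ k * P⁻¹ * (P * B * P⁻¹) = P * B ^ k * (P⁻¹ * P) * B * P⁻¹ := by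
              simp only [Matrix.mul_assoc]
          _ = P * (B ^ k * B) * P⁻¹ := by rw [hiP]; simp only [Matrix.mul_assoc, Matrix.mul_one]
    rw [hpow]
    have halg : (algebraMap ℝ (Matrix (Fin 5) (Fin 5) ℝ)) a * (P * B ^ n * P⁻¹)
        = P * ((algebraMap ℝ _) a * B ^ n) * P⁻¹ := by
      rw [Algebra.algebraMap_eq_smul_one]
      simp [Matrix.smul_mul, Matrix.mul_smul]
    exact halg

lemma not_diagonalizable :
    ¬ ∃ (P : Matrix (Fin 5) (Fin 5) ℝ) (d : Fin 5 → ℝ),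
        IsUnit P ∧ A = P * Matrix.diagonal d * P⁻¹ := by
  rintro ⟨P, d, hP, hA⟩
  set s : Finset ℝ := Finset.image d Finset.univ with hs
  set q : ℝ[X] := ∏ a ∈ s, (X - C a) with hq
  have hqD : aeval (Matrix.diagonal d) q = 0 := by
    have key : aeval ((Matrix.diagonalAlgHom (n := Fin 5) ℝ) d) q
        = Matrix.diagonalAlgHom ℝ (aeval d q) :=
      Polynomial.aeval_algHom_apply (Matrix.diagonalAlgHom ℝ) d q
    have hd0 : aeval d q = 0 := by
      funext i
      rw [Polynomial.aeval_fn_apply, hq]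
      simp only [_root_.map_prod, map_sub, aeval_X, aeval_C, Algebra.algebraMap_self,
        RingHom.id_apply, Pi.zero_apply]
      exact Finset.prod_eq_zero (Finset.mem_image_of_mem d (Finset.mem_univ i)) (by simp)
    rw [show (Matrix.diagonal d : Matrix (Fin 5) (Fin 5) ℝ)
        = Matrix.diagonalAlgHom ℝ d from rfl, key, hd0, map_zero]
  have hqA : aeval A q = 0 := by
    rw [hA, aeval_conj _ _ hP, hqD, Matrix.mul_zero, Matrix.zero_mul]
  have hdvd : pmin ∣ q := minpoly_eq ▸ minpoly.dvd ℝ A hqA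
  have h33 : (X - C (-2:ℝ)) ^ 2 ∣ q := by
    refine dvd_trans ?_ hdvd
    exact ⟨f1 * f2, by rw [← f3_eq]; ring⟩
  have hqne : q ≠ 0 := by
    apply Polynomial.Monic.ne_zero
    exact monic_prod_of_monic _ _ (fun a _ => monic_X_sub_C a)
  have hcount : 2 ≤ rootMultiplicity (-2:ℝ) q :=
    (Polynomial.le_rootMultiplicity_iff hqne).mpr h33
  rw [← Polynomial.count_roots, hq, Polynomial.roots_prod_X_sub_C] at hcount
  have : Multiset.count (-2:ℝ) s.val ≤ 1 :=
    Multiset.nodup_iff_count_le_one.mp s.nodup _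
  omega

end NondiagAux

theorem nondiagonalizable_realization :
    let A : Matrix (Fin 5) (Fin 5) ℝ :=
      (1 / 4 : ℝ) • !![0, 8, 1, 0, 0;
                       8, 0, 1, 0, 0;
                       75 / 2, 75 / 2, 0, 1, 0;
                       0, 0, 0, 0, 1;
                       829, 829, 256, 110, 0]
    (∀ i j, 0 ≤ A i j) ∧
      A.charpoly = (X - C (15 / 4)) * (X - C (9 / 4)) * (X + C 2) ^ 3 ∧
      minpoly ℝ A = (X - C (15 / 4)) * (X - C (9 / 4)) * (X + C 2) ^ 2 ∧
      ¬ ∃ (P : Matrix (Fin 5) (Fin 5) ℝ) (d : Fin 5 → ℝ),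
          IsUnit P ∧ A = P * Matrix.diagonal d * P⁻¹ := by
  intro A
  refine ⟨?_, ?_, ?_, ?_⟩
  · intro i j
    fin_cases i <;> fin_cases j <;> norm_num [A]
  · apply Polynomial.funext
    intro r
    rw [Matrix.charpoly, ← coe_evalRingHom, RingHom.map_det]
    have h2 : ((evalRingHom r).mapMatrix A.charmatrix) =
      !![r, -2, -(1/4), 0, 0;
         -2, r, -(1/4), 0, 0;
         -(75/8), -(75/8), r, -(1/4), 0;
         0, 0, 0, r, -(1/4);
         -(829/4), -(829/4), -64, -(110/4), r] := by
      ext i j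
      fin_cases i <;> fin_cases j <;>
        simp [A, charmatrix_apply, Matrix.one_apply] <;> norm_num
    rw [h2, coe_evalRingHom]
    simp only [Matrix.det_succ_row_zero, Fin.sum_univ_succ, Matrix.submatrix_apply,
      Fin.sum_univ_zero, eval_mul, eval_pow, eval_add, eval_sub, eval_X, eval_C,
      show ∀ (i : Fin 4), (0:Fin 5).succAbove i = i.succ by decide,
      show ((1:Fin 5).succAbove 0 = 0 ∧ (1:Fin 5).succAbove 1 = 2 ∧ (1:Fin 5).succAbove 2 = 3 ∧
        (1:Fin 5).succAbove 3 = 4) by decide]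
    simp [Fin.succAbove, Fin.lt_def, Matrix.vecHead, Matrix.vecTail]
    ring
  · exact NondiagAux.minpoly_eq
  · exact NondiagAux.not_diagonalizable
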